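/- Fix γ ∈ (0,1) and define the sequence of positive weights b_1 = 1 and b_n = (1 − γ) γ^{−(n−1)} for n ≥ 2 (these are the weights for which exponential moving averaging with factor γ and initialization at the first observation satisfies τ̂_n = (1/A_n) Σ_{k=1}^n b_k τ̃_k, where A_n = Σ_{k=1}^n b_k = γ^{−(n−1)}). Then (b_n)_{n≥1} is not an averaging scheme; that is, there is no ψ ∈ Ψ_c such that b_n ≤ A_n/ψ(A_n) holds for all sufficiently large n. -/

import Mathlib

open Filter MeasureTheory Topology

/-- `Ψ_c`: the set of monotonically increasing functions `ψ : (0,∞) → (0,∞)` with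
`∑_{n=1}^∞ 1/(n ψ(n)) < ∞`. -/
def PsiC (ψ : ℝ → ℝ) : Prop :=
  (∀ x : ℝ, 0 < x → 0 < ψ x) ∧ MonotoneOn ψ (Set.Ioi (0 : ℝ)) ∧
    Summable fun n : ℕ => 1 / ((n + 1 : ℝ) * ψ (n + 1))

/-- The EMA weights `b_1 = 1`, `b_n = (1-γ)γ^{-(n-1)}` for `n ≥ 2` do not form an
averaging scheme: there is no `ψ ∈ Ψ_c` with `b_n ≤ A_n / ψ(A_n)` for all large `n`. -/
theorem stmt_3 (γ : ℝ) (hγ : γ ∈ Set.Ioo (0 : ℝ) 1)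
    (b : ℕ → ℝ) (hb1 : b 1 = 1)
    (hbn : ∀ n : ℕ, 2 ≤ n → b n = (1 - γ) * γ ^ (-((n : ℤ) - 1))) :
    ¬ ∃ ψ : ℝ → ℝ, PsiC ψ ∧ ∀ᶠ n : ℕ in atTop,
        b n ≤ (∑ k ∈ Finset.Icc 1 n, b k) / ψ (∑ k ∈ Finset.Icc 1 n, b k) := by
  rintro ⟨ψ, ⟨hpos, hmono, hsum⟩, hev⟩
  obtain ⟨γ0, γ1⟩ := hγ
  have hγ0 : γ ≠ 0 := ne_of_gt γ0
  have h1γ : (0:ℝ) < 1 - γ := by linarith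
  set A : ℕ → ℝ := fun n => γ ^ (-((n : ℤ) - 1)) with hA
  have hApos : ∀ n, 0 < A n := fun n => zpow_pos γ0 _
  have hsumA : ∀ n, 1 ≤ n → ∑ k ∈ Finset.Icc 1 n, b k = A n := by
    intro n hn
    induction n, hn using Nat.le_induction with
    | base => simp [hb1, hA]
    | succ n hn ih =>
      rw [Finset.sum_Icc_succ_top (by omega), ih, hbn (n + 1) (by omega)]
      show γ ^ (-((n : ℤ) - 1)) + (1 - γ) * γ ^ (-(((n+1 : ℕ) : ℤ) - 1))
          = γ ^ (-(((n+1 : ℕ) : ℤ) - 1))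
      have h1 : (-((n : ℤ) - 1)) = 1 + (-(((n+1 : ℕ) : ℤ) - 1)) := by push_cast; ring
      rw [h1, zpow_add₀ hγ0, zpow_one]
      ring
  obtain ⟨N, hN⟩ := eventually_atTop.mp hev
  set C : ℝ := 1 / (1 - γ) with hC
  have hCpos : 0 < C := by positivity
  -- ψ (A n) ≤ C for large n
  have hψA : ∀ n, max N 2 ≤ n → ψ (A n) ≤ C := by
    intro n hn
    have h2 : 2 ≤ n := le_trans (le_max_right _ _) hn
    have hNn : N ≤ n := le_trans (le_max_left _ _) hn
    have hb := hN n hNn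
    rw [hsumA n (by omega), hbn n h2] at hb
    have hψpos : 0 < ψ (A n) := hpos _ (hApos n)
    rw [le_div_iff₀ hψpos] at hb
    have : (1 - γ) * ψ (A n) ≤ 1 := by
      have := hApos n
      nlinarith
    rw [hC, le_div_iff₀ h1γ]
    linarith
  -- ψ is bounded by C on (0,∞)
  have hψbd : ∀ x : ℝ, 0 < x → ψ x ≤ C := by
    intro x hx
    have hinv : 1 < γ⁻¹ := (one_lt_inv₀ γ0).mpr γ1
    obtain ⟨m, hm⟩ := pow_unbounded_of_one_lt x hinv
    set n := max (m + 1) (max N 2) with hn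
    have hn1 : 1 ≤ n := by omega
    have hAn : A n = γ⁻¹ ^ (n - 1) := by
      have hcast : (-((n : ℤ) - 1)) = -((n - 1 : ℕ) : ℤ) := by omega
      rw [hA]
      simp only [hcast, zpow_neg, zpow_natCast, inv_pow]
    have hxA : x ≤ A n := by
      rw [hAn]
      calc x ≤ γ⁻¹ ^ m := le_of_lt hm
        _ ≤ γ⁻¹ ^ (n - 1) := pow_le_pow_right₀ (le_of_lt hinv) (by omega)
    calc ψ x ≤ ψ (A n) := hmono hx (hApos n) hxA
      _ ≤ C := hψA n (le_max_right _ _)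
  -- contradiction with summability
  have hsum2 : Summable (fun n : ℕ => (1 / C) * (1 / ((n : ℝ) + 1))) := by
    apply Summable.of_nonneg_of_le (fun n => by positivity) _ hsum
    intro n
    have hn1 : (0:ℝ) < (n : ℝ) + 1 := by positivity
    have hψp : 0 < ψ ((n : ℝ) + 1) := hpos _ hn1
    have hle : ((n : ℝ) + 1) * ψ ((n : ℝ) + 1) ≤ ((n : ℝ) + 1) * C := by
      have := hψbd ((n : ℝ) + 1) hn1
      nlinarith
    have := one_div_le_one_div_of_le (by positivity) hle
    calc 1 / C * (1 / ((n : ℝ) + 1)) = 1 / (((n : ℝ) + 1) * C) := by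
          field_simp
      _ ≤ 1 / (((n : ℝ) + 1) * ψ ((n : ℝ) + 1)) := this
  have hsum3 : Summable (fun n : ℕ => 1 / ((n : ℝ) + 1)) :=
    (summable_mul_left_iff (by positivity : (1:ℝ)/C ≠ 0)).mp hsum2
  have hsum4 : Summable (fun n : ℕ => 1 / (n : ℝ)) := by
    rw [← summable_nat_add_iff 1]
    convert hsum3 using 2 with n
    · rfl
    push_cast
    ring
  exact Real.not_summable_one_div_natCast hsum4
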